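/- Let δ ∈ ℝ and let n ≥ 1 be an integer. Define ρ_n(δ,t) := ((-δ)_n / (n-1)!) ∫₀¹ (1-u)^{n-1} (1-tu)^{δ-n} du for t ∈ [0,1). Then ρ_n(δ,·) is differentiable on [0,1), its derivative satisfies ρ_n'(δ,t) = ((-δ)_{n+1} / (n-1)!) ∫₀¹ u (1-u)^{n-1} (1-tu)^{δ-n-1} du for all t ∈ [0,1), and for every t ∈ [0,1) the sign of ρ_n'(δ,t) equals the sign of (-δ)_{n+1} (where sign 0 := 0). -/

import Mathlib

open MeasureTheory Real Filter

/-- The Pochhammer symbol `(a)_k = a (a+1) ⋯ (a+k-1)`, with `(a)_0 = 1`. -/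
noncomputable def poch (a : ℝ) : ℕ → ℝ
  | 0 => 1
  | k + 1 => poch a k * (a + k)

/-- rpow bound for a base between two positive numbers, any exponent. -/
lemma rpow_le_max {a b c p : ℝ} (ha : 0 < a) (hab : a ≤ b) (hbc : b ≤ c) :
    b ^ p ≤ max (a ^ p) (c ^ p) := by
  rcases le_or_gt 0 p with hp | hp
  · exact le_max_of_le_right (Real.rpow_le_rpow (ha.trans_le hab).le hbc hp)
  · exact le_max_of_le_left (Real.rpow_le_rpow_of_nonpos ha hab hp.le)

theorem taylor_remainder_derivative (δ : ℝ) (n : ℕ) (hn : 1 ≤ n) :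
    let ρ : ℝ → ℝ := fun t =>
      poch (-δ) n / ((n - 1).factorial : ℝ) *
        ∫ u in (0:ℝ)..1, (1 - u) ^ (n - 1) * (1 - t * u) ^ (δ - (n:ℝ))
    let ρ' : ℝ → ℝ := fun t =>
      poch (-δ) (n + 1) / ((n - 1).factorial : ℝ) *
        ∫ u in (0:ℝ)..1, u * (1 - u) ^ (n - 1) * (1 - t * u) ^ (δ - (n:ℝ) - 1)
    ∀ t ∈ Set.Ico (0:ℝ) 1,
      HasDerivAt ρ (ρ' t) t ∧
      (0 < poch (-δ) (n + 1) → 0 < ρ' t) ∧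
      (poch (-δ) (n + 1) < 0 → ρ' t < 0) ∧
      (poch (-δ) (n + 1) = 0 → ρ' t = 0) := by
  intro ρ ρ' t ht
  obtain ⟨ht0, ht1⟩ := ht
  -- basic positivity facts
  have hbase : ∀ u ∈ Set.Icc (0:ℝ) 1, 0 < 1 - t * u := by
    intro u hu
    have : t * u ≤ t := by
      calc t * u ≤ t * 1 := by nlinarith [hu.1, hu.2]
      _ = t := mul_one t
    linarith
  -- the positive integral
  set I : ℝ := ∫ u in (0:ℝ)..1, u * (1 - u) ^ (n - 1) * (1 - t * u) ^ (δ - (n:ℝ) - 1) with hI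
  have hcontI : ContinuousOn
      (fun u : ℝ => u * (1 - u) ^ (n - 1) * (1 - t * u) ^ (δ - (n:ℝ) - 1))
      (Set.Icc 0 1) := by
    apply ContinuousOn.mul
    · fun_prop
    · apply ContinuousOn.rpow_const
      · fun_prop
      · intro u hu
        exact Or.inl (hbase u hu).ne'
  have hIint : IntervalIntegrable
      (fun u : ℝ => u * (1 - u) ^ (n - 1) * (1 - t * u) ^ (δ - (n:ℝ) - 1)) volume 0 1 := by
    apply ContinuousOn.intervalIntegrable
    rw [Set.uIcc_of_le zero_le_one]
    exact hcontI
  have hIpos : 0 < I := by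
    rw [hI]
    apply intervalIntegral.intervalIntegral_pos_of_pos_on hIint _ one_pos
    intro u hu
    have h1 : 0 < 1 - t * u := hbase u ⟨hu.1.le, hu.2.le⟩
    have h2 : (0:ℝ) < 1 - u := by linarith [hu.2]
    exact mul_pos (mul_pos hu.1 (pow_pos h2 _)) (Real.rpow_pos_of_pos h1 _)
  have hfac : (0:ℝ) < ((n - 1).factorial : ℝ) := by positivity
  -- derivative via dominated convergence
  have hderiv : HasDerivAt ρ (ρ' t) t := by
    set ε : ℝ := (1 - t) / 2 with hε
    have hε_pos : 0 < ε := by simp only [hε]; linarith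
    set r : ℝ := (1 + t) / 2 with hr
    have hr1 : r < 1 := by simp only [hr]; linarith
    have hball : ∀ x ∈ Metric.ball t ε, ∀ u ∈ Set.Icc (0:ℝ) 1,
        1 - r ≤ 1 - x * u ∧ 1 - x * u ≤ 2 := by
      intro x hx u hu
      rw [Metric.mem_ball, Real.dist_eq, abs_lt] at hx
      constructor
      · have : x * u ≤ r := by
          rcases le_or_gt x 0 with h | h
          · nlinarith [hu.1, hu.2]
          · nlinarith [hu.1, hu.2]
        linarith
      · nlinarith [hu.1, hu.2]
    have hrpos : (0:ℝ) < 1 - r := by linarith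
    set M : ℝ := |δ - (n:ℝ)| * max ((1 - r) ^ (δ - (n:ℝ) - 1)) ((2:ℝ) ^ (δ - (n:ℝ) - 1))
      with hM
    set F : ℝ → ℝ → ℝ := fun x u => (1 - u) ^ (n - 1) * (1 - x * u) ^ (δ - (n:ℝ)) with hF
    set F' : ℝ → ℝ → ℝ := fun x u =>
        (1 - u) ^ (n - 1) * (-u * (δ - (n:ℝ)) * (1 - x * u) ^ (δ - (n:ℝ) - 1)) with hF'
    have hmain := intervalIntegral.hasDerivAt_integral_of_dominated_loc_of_deriv_le
      (F := F) (F' := F') (x₀ := t) (a := 0) (b := 1) (bound := fun _ => M)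
      (μ := volume) (Metric.ball_mem_nhds t hε_pos)
      (Filter.eventually_of_mem (Metric.ball_mem_nhds t hε_pos) (by
        intro x hx
        apply ContinuousOn.aestronglyMeasurable _ measurableSet_uIoc
        rw [Set.uIoc_of_le zero_le_one]
        apply ContinuousOn.mono _ Set.Ioc_subset_Icc_self
        apply ContinuousOn.mul
        · fun_prop
        · apply ContinuousOn.rpow_const
          · fun_prop
          · intro u hu
            exact Or.inl (by linarith [(hball x hx u hu).1])))
      (by
        -- interval integrability of F t
        apply ContinuousOn.intervalIntegrable
        rw [Set.uIcc_of_le zero_le_one]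
        apply ContinuousOn.mul
        · fun_prop
        · apply ContinuousOn.rpow_const
          · fun_prop
          · intro u hu
            exact Or.inl (hbase u hu).ne')
      (by
        apply ContinuousOn.aestronglyMeasurable _ measurableSet_uIoc
        rw [Set.uIoc_of_le zero_le_one]
        apply ContinuousOn.mono _ Set.Ioc_subset_Icc_self
        apply ContinuousOn.mul
        · fun_prop
        · apply ContinuousOn.mul
          · fun_prop
          · apply ContinuousOn.rpow_const
            · fun_prop
            · intro u hu
              exact Or.inl (hbase u hu).ne')
      (Filter.Eventually.of_forall (by
        intro u hu x hx
        rw [Set.uIoc_of_le zero_le_one] at hu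
        have hu' : u ∈ Set.Icc (0:ℝ) 1 := ⟨hu.1.le, hu.2⟩
        obtain ⟨hb1, hb2⟩ := hball x hx u hu'
        have h1u : 0 ≤ (1 - u) ^ (n - 1) := by
          have : (0:ℝ) ≤ 1 - u := by linarith [hu.2]
          positivity
        have h1u' : (1 - u) ^ (n - 1) ≤ 1 := by
          apply pow_le_one₀ (by linarith [hu.2]) (by linarith [hu.1])
        have hxu : 0 < 1 - x * u := by linarith
        have hrpow : (1 - x * u) ^ (δ - (n:ℝ) - 1)
            ≤ max ((1 - r) ^ (δ - (n:ℝ) - 1)) ((2:ℝ) ^ (δ - (n:ℝ) - 1)) :=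
          rpow_le_max hrpos hb1 hb2
        have hrpow0 : 0 ≤ (1 - x * u) ^ (δ - (n:ℝ) - 1) := Real.rpow_nonneg hxu.le _
        simp only [hF', Real.norm_eq_abs, abs_mul, abs_neg]
        rw [abs_of_nonneg h1u, abs_of_nonneg hu.1.le, abs_of_nonneg hrpow0]
        calc (1 - u) ^ (n - 1) * (u * |δ - (n:ℝ)| * (1 - x * u) ^ (δ - (n:ℝ) - 1))
            ≤ 1 * (1 * |δ - (n:ℝ)| * (max ((1 - r) ^ (δ - (n:ℝ) - 1)) ((2:ℝ) ^ (δ - (n:ℝ) - 1)))) := by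
              apply mul_le_mul h1u' _ _ zero_le_one
              · exact mul_le_mul (mul_le_mul_of_nonneg_right hu.2 (abs_nonneg _)) hrpow
                  hrpow0 (by positivity)
              · exact mul_nonneg (mul_nonneg hu.1.le (abs_nonneg _)) hrpow0
          _ = |δ - (n:ℝ)| * max ((1 - r) ^ (δ - (n:ℝ) - 1)) ((2:ℝ) ^ (δ - (n:ℝ) - 1)) := by ring))
      intervalIntegrable_const
      (Filter.Eventually.of_forall (by
        intro u hu x hx
        rw [Set.uIoc_of_le zero_le_one] at hu
        have hu' : u ∈ Set.Icc (0:ℝ) 1 := ⟨hu.1.le, hu.2⟩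
        have hxu : 0 < 1 - x * u := by linarith [(hball x hx u hu').1]
        have hinner : HasDerivAt (fun x : ℝ => 1 - x * u) (-u) x := by
          simpa using ((hasDerivAt_id x).mul_const u).const_sub 1
        exact (hinner.rpow_const (Or.inl hxu.ne')).const_mul _))
    have hD := hmain.2
    have hρ : HasDerivAt ρ
        (poch (-δ) n / ((n - 1).factorial : ℝ) * ∫ u in (0:ℝ)..1, F' t u) t :=
      hD.const_mul _
    convert hρ using 1
    have : (∫ u in (0:ℝ)..1, F' t u)
        = ((n:ℝ) - δ) * I := by
      rw [hI, ← intervalIntegral.integral_const_mul]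
      apply intervalIntegral.integral_congr
      intro u _
      simp only [hF']
      ring
    rw [this]
    simp only [ρ', poch]
    rw [← hI]
    field_simp
    ring
  refine ⟨hderiv, ?_, ?_, ?_⟩
  · intro h
    simp only [ρ', ← hI]
    exact mul_pos (div_pos h hfac) hIpos
  · intro h
    simp only [ρ', ← hI]
    apply mul_neg_of_neg_of_pos _ hIpos
    exact div_neg_of_neg_of_pos h hfac
  · intro h
    simp only [ρ', ← hI, h, zero_div, zero_mul]
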